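/- In Γ = AΓL₁(q) with q = q₁^s and |φ^i| = s, the s-th power of the element (a,1)φ^i equals (Tr_{F_q/F_{q₁}}(a), 1). Consequently, if Tr_{F_q/F_{q₁}}(a) = 0 and Tr_{F_q/F_{q₁}}(b) ≠ 0 then (a,1)φ^i and (b,1)φ^i have different orders. -/

import Mathlib

/-- An element `(a, λ)·τ` of `Γ = AΓL₁(q) = (F_q⁺ : F_q^×) : ⟨φ⟩` is encoded as the triple
`(a, λ, τ) : F × F × (F ≃+* F)`, with the multiplication of the paper:
`(a,λ)φ^i (b,μ)φ^j = (a + λ⁻¹ b^{φ^{-i}}, λ μ^{φ^{-i}}) φ^{i+j}`. -/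
def agmul {F : Type*} [Field F] (x y : F × F × (F ≃+* F)) : F × F × (F ≃+* F) :=
  (x.1 + x.2.1⁻¹ * x.2.2.symm y.1, x.2.1 * x.2.2.symm y.2.1, x.2.2 * y.2.2)

/-- `n`-th power in `Γ`, with identity element `(0,1,1)`. -/
def agpow {F : Type*} [Field F] : ℕ → F × F × (F ≃+* F) → F × F × (F ≃+* F)
  | 0, _ => (0, 1, 1)
  | n + 1, x => agmul x (agpow n x)

lemma agpow_formula {F : Type*} [Field F] (σ : F ≃+* F) (a : F) (n : ℕ) :
    agpow n (a, 1, σ) = (∑ k ∈ Finset.range n, ((σ⁻¹ : F ≃+* F) ^ k) a, 1, σ ^ n) := by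
  induction n with
  | zero => simp [agpow]
  | succ n ih =>
    rw [agpow, ih, agmul]
    simp only [inv_one, one_mul, map_one, map_sum]
    refine Prod.ext ?_ (Prod.ext rfl ?_)
    · show a + ∑ k ∈ Finset.range n, σ.symm ((σ⁻¹ ^ k) a) = _
      rw [Finset.sum_range_succ', add_comm]
      simp only [pow_zero]
      congr 1
      refine Finset.sum_congr rfl fun k _ => ?_
      show σ.symm ((σ⁻¹ ^ k) a) = (σ⁻¹ ^ (k + 1)) a
      rw [pow_succ']
      rfl
    · show σ * σ ^ n = σ ^ (n + 1)
      rw [pow_succ']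

lemma sum_inv_pow_eq {F : Type*} [Field F] (σ : F ≃+* F) (s : ℕ) (hs0 : 0 < s)
    (h1 : σ ^ s = 1) (a : F) :
    ∑ k ∈ Finset.range s, ((σ⁻¹ : F ≃+* F) ^ k) a = ∑ k ∈ Finset.range s, (σ ^ k) a := by
  have key : ∀ k < s, (s - (s - k) % s) % s = k := by
    intro k hk
    rcases Nat.eq_zero_or_pos k with rfl | h
    · simp
    · have e1 : (s - k) % s = s - k := Nat.mod_eq_of_lt (by omega)
      rw [e1, Nat.sub_sub_self hk.le, Nat.mod_eq_of_lt hk]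
  refine Finset.sum_nbij' (fun k => (s - k) % s) (fun k => (s - k) % s) ?_ ?_ ?_ ?_ ?_
  · intro k hk; simpa using Nat.mod_lt _ hs0
  · intro k hk; simpa using Nat.mod_lt _ hs0
  · intro k hk; simp only [Finset.mem_range] at hk; exact key k hk
  · intro k hk; simp only [Finset.mem_range] at hk; exact key k hk
  · intro k hk
    simp only [Finset.mem_range] at hk
    rcases Nat.eq_zero_or_pos k with rfl | hk0
    · simp
    · have he : (s - k) % s = s - k := Nat.mod_eq_of_lt (by omega)
      rw [he]
      have hmul : σ ^ (s - k) * σ ^ k = 1 := by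
        rw [← pow_add]
        have hsk : s - k + k = s := by omega
        rw [hsk, h1]
      have h2 : (σ⁻¹ : F ≃+* F) ^ k = σ ^ (s - k) := by
        rw [inv_pow]
        exact (eq_inv_of_mul_eq_one_left hmul).symm
      rw [h2]

/-- In `Γ = AΓL₁(q)` with `q = q₁^s` and `σ = φ^i` of order `s` (so
`Tr_{F_q/F_{q₁}}(a) = ∑_{k<s} σ^k(a)`): the `s`-th power of `(a,1)φ^i` equals `(Tr(a),1)`;
consequently, if `Tr(a) = 0` and `Tr(b) ≠ 0` then `(a,1)φ^i` and `(b,1)φ^i` have different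
orders (the least positive `n` with `n`-th power trivial differs). -/
theorem stmt_10 {F : Type*} [Field F] [Finite F] (σ : F ≃+* F) (s : ℕ)
    (hs : orderOf σ = s) (hs0 : 0 < s) :
    (∀ a : F, agpow s (a, 1, σ) = (∑ k ∈ Finset.range s, (σ ^ k) a, 1, 1)) ∧
    (∀ a b : F, (∑ k ∈ Finset.range s, (σ ^ k) a) = 0 →
      (∑ k ∈ Finset.range s, (σ ^ k) b) ≠ 0 →
      sInf {n : ℕ | 0 < n ∧ agpow n (a, 1, σ) = (0, 1, 1)} ≠
        sInf {n : ℕ | 0 < n ∧ agpow n (b, 1, σ) = (0, 1, 1)}) := by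
  have h1 : σ ^ s = 1 := by rw [← hs]; exact pow_orderOf_eq_one σ
  have part1 : ∀ a : F, agpow s (a, 1, σ) = (∑ k ∈ Finset.range s, (σ ^ k) a, 1, 1) := by
    intro a
    rw [agpow_formula, sum_inv_pow_eq σ s hs0 h1, h1]
  refine ⟨part1, fun a b ha hb => ?_⟩
  -- sInf of the first set is s
  have memA : s ∈ {n : ℕ | 0 < n ∧ agpow n (a, 1, σ) = (0, 1, 1)} := by
    refine ⟨hs0, ?_⟩
    rw [part1 a, ha]
  have hAinf : sInf {n : ℕ | 0 < n ∧ agpow n (a, 1, σ) = (0, 1, 1)} = s := by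
    refine le_antisymm (Nat.sInf_le memA) (le_csInf ⟨s, memA⟩ ?_)
    rintro n ⟨hn0, hn⟩
    have h3 : σ ^ n = 1 := by
      have := congrArg (fun p => p.2.2) hn
      rwa [agpow_formula] at this
    have : s ∣ n := hs ▸ orderOf_dvd_of_pow_eq_one h3
    exact Nat.le_of_dvd hn0 this
  rw [hAinf]
  intro heq
  have hne : {n : ℕ | 0 < n ∧ agpow n (b, 1, σ) = (0, 1, 1)}.Nonempty := by
    by_contra h
    rw [Set.not_nonempty_iff_eq_empty] at h
    rw [h, Nat.sInf_empty] at heq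
    omega
  have := Nat.sInf_mem hne
  rw [← heq] at this
  have h4 := this.2
  rw [part1 b] at h4
  exact hb (congrArg (fun p => p.1) h4)
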